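/- The depth-first post-order reading of labels defines a bijection between the set of sorted trees of degree n and the symmetric group S_n. -/

import Mathlib

/-- An `X`-labelled planar rooted tree: an (unlabelled) root together with an ordered
list of pairs (label of child, subtree rooted at that child). -/
inductive LTree (X : Type) : Type
  | node : List (X × LTree X) → LTree X

/-- The list of labels of the non-root nodes, in depth-first (pre-order) traversal. -/
def LTree.labels {X : Type} : LTree X → List X
  | .node ts => (ts.attach.map (fun p => p.1.1 :: p.1.2.labels)).flatten
decreasing_by
  obtain ⟨⟨a, b⟩, hm⟩ := p
  have := List.sizeOf_lt_of_mem hm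
  simp only [Prod.mk.sizeOf_spec, LTree.node.sizeOf_spec] at *
  omega

/-- The degree of a labelled tree: its number of non-root nodes. -/
def LTree.degree {X : Type} (t : LTree X) : ℕ := t.labels.length

/-- The labels of the children of the root. -/
def LTree.rootLabels {X : Type} : LTree X → List X
  | .node ts => ts.map Prod.fst

/-- A labelled tree is increasing if along every path starting at the root the labels
increase, i.e. every node's label is smaller than the labels of all of its children. -/
def LTree.Increasing : LTree ℕ → Prop
  | .node ts => ∀ p ∈ ts, (∀ l ∈ p.2.rootLabels, p.1 < l) ∧ p.2.Increasing
decreasing_by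
  obtain ⟨a, b⟩ := p
  rename_i hm
  have := List.sizeOf_lt_of_mem hm
  simp only [Prod.mk.sizeOf_spec, LTree.node.sizeOf_spec] at *
  omega

/-- A labelled tree is sorted if the labels of the children of each node (including the
root) increase from left to right. -/
def LTree.SortedChildren : LTree ℕ → Prop
  | .node ts => (ts.map Prod.fst).Chain' (· < ·) ∧ ∀ p ∈ ts, p.2.SortedChildren
decreasing_by
  obtain ⟨a, b⟩ := p
  rename_i hm
  have := List.sizeOf_lt_of_mem hm
  simp [Prod.mk.sizeOf_spec, LTree.node.sizeOf_spec] at this ⊢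
  omega

/-- The depth-first post-order reading of the labels: for each node, traverse its
subtrees from left to right and then read the node's own label. -/
def LTree.post {X : Type} : LTree X → List X
  | .node ts => (ts.attach.map (fun p => p.1.2.post ++ [p.1.1])).flatten
decreasing_by
  obtain ⟨⟨a, b⟩, hm⟩ := p
  have := List.sizeOf_lt_of_mem hm
  simp only [Prod.mk.sizeOf_spec, LTree.node.sizeOf_spec] at *
  omega


namespace LTree

theorem post_node {X : Type} (ts : List (X × LTree X)) :
    (LTree.node ts).post = (ts.map (fun p => p.2.post ++ [p.1])).flatten := by
  rw [LTree.post]; congr 1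
  exact List.attach_map_val (f := fun p : X × LTree X => p.2.post ++ [p.1])

theorem labels_node {X : Type} (ts : List (X × LTree X)) :
    (LTree.node ts).labels = (ts.map (fun p => p.1 :: p.2.labels)).flatten := by
  rw [LTree.labels]; congr 1
  exact List.attach_map_val (f := fun p : X × LTree X => p.1 :: p.2.labels)

theorem increasing_node (ts : List (ℕ × LTree ℕ)) :
    (LTree.node ts).Increasing ↔
      ∀ p ∈ ts, (∀ l ∈ p.2.rootLabels, p.1 < l) ∧ p.2.Increasing := by
  rw [LTree.Increasing]

theorem sorted_node (ts : List (ℕ × LTree ℕ)) :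
    (LTree.node ts).SortedChildren ↔
      (ts.map Prod.fst).Chain' (· < ·) ∧ ∀ p ∈ ts, p.2.SortedChildren := by
  rw [LTree.SortedChildren]

theorem post_cons {X : Type} (p : X × LTree X) (ts : List (X × LTree X)) :
    (LTree.node (p :: ts)).post = p.2.post ++ [p.1] ++ (LTree.node ts).post := by
  rw [post_node, post_node, List.map_cons, List.flatten_cons, List.append_assoc]

theorem post_perm_labels {X : Type} : ∀ t : LTree X, t.post.Perm t.labels
  | .node ts => by
    rw [post_node, labels_node]
    apply List.Perm.flatten_congr
    rw [List.forall₂_map_right_iff, List.forall₂_map_left_iff, List.forall₂_same]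
    intro p hp
    have h1 := post_perm_labels p.2
    exact (List.perm_append_singleton p.1 p.2.post).trans (h1.cons p.1)
termination_by t => sizeOf t
decreasing_by
  have h := List.sizeOf_lt_of_mem hp
  obtain ⟨a, b⟩ := p
  simp only [Prod.mk.sizeOf_spec, LTree.node.sizeOf_spec] at h ⊢
  omega

theorem rootLabels_subset_labels {X : Type} (t : LTree X) : t.rootLabels ⊆ t.labels := by
  obtain ⟨ts⟩ := t
  rw [LTree.rootLabels, labels_node]
  intro x hx
  rw [List.mem_map] at hx
  obtain ⟨p, hp, rfl⟩ := hx
  rw [List.mem_flatten]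
  exact ⟨p.1 :: p.2.labels, List.mem_map_of_mem hp, List.mem_cons_self⟩

theorem lt_labels : ∀ t : LTree ℕ, t.Increasing → ∀ a : ℕ,
    (∀ x ∈ t.rootLabels, a < x) → ∀ y ∈ t.labels, a < y
  | .node ts => by
    intro hinc a ha y hy
    rw [increasing_node] at hinc
    rw [labels_node, List.mem_flatten] at hy
    obtain ⟨l, hl, hyl⟩ := hy
    rw [List.mem_map] at hl
    obtain ⟨p, hp, rfl⟩ := hl
    have hap : a < p.1 := ha p.1 (by rw [LTree.rootLabels]; exact List.mem_map_of_mem hp)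
    rcases List.mem_cons.mp hyl with rfl | hy2
    · exact hap
    · exact lt_labels p.2 (hinc p hp).2 a
        (fun x hx => lt_trans hap ((hinc p hp).1 x hx)) y hy2
termination_by t => sizeOf t
decreasing_by
  obtain ⟨c, b⟩ := p
  have := List.sizeOf_lt_of_mem hp
  simp only [Prod.mk.sizeOf_spec, LTree.node.sizeOf_spec] at *
  omega


/-- The minimum of a list of naturals (0 for the empty list). -/
def wmin (w : List ℕ) : ℕ := w.min?.getD 0

theorem wmin_spec (w : List ℕ) (h : w ≠ []) : wmin w ∈ w ∧ ∀ x ∈ w, wmin w ≤ x := by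
  obtain ⟨a, ha⟩ : ∃ a, w.min? = some a := by
    cases w with
    | nil => simp at h
    | cons x xs => exact ⟨_, List.min?_cons⟩
  have ha' := ha
  rw [List.min?_eq_some_iff] at ha'
  have hw : wmin w = a := by simp [wmin, ha]
  rw [hw]
  exact ha'

/-- Parse a word into the children list of a sorted increasing tree. -/
def parse (w : List ℕ) : List (ℕ × LTree ℕ) :=
  if h : w.length = 0 then [] else
    let i := w.idxOf (wmin w)
    (wmin w, .node (parse (w.take i))) :: parse (w.drop (i + 1))
termination_by w.length
decreasing_by
  all_goals
    have hm : wmin w ∈ w := (wmin_spec w (fun hw => h (by simp [hw]))).1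
    have hi := List.idxOf_lt_length_of_mem hm
    simp only [List.length_take, List.length_drop]
    omega

theorem parse_nil : parse [] = [] := by rw [parse]; simp

theorem parse_ne_nil (w : List ℕ) (h : w ≠ []) :
    parse w = (wmin w, .node (parse (w.take (w.idxOf (wmin w))))) ::
      parse (w.drop (w.idxOf (wmin w) + 1)) := by
  rw [parse]
  simp [h, List.length_eq_zero_iff]

theorem wmin_decomp (w : List ℕ) (h : w ≠ []) :
    w = w.take (w.idxOf (wmin w)) ++ wmin w :: w.drop (w.idxOf (wmin w) + 1) := by
  have hm : wmin w ∈ w := (wmin_spec w h).1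
  have hi : w.idxOf (wmin w) < w.length := List.idxOf_lt_length_of_mem hm
  conv_lhs => rw [← List.take_append_drop (w.idxOf (wmin w)) w]
  rw [List.drop_eq_getElem_cons hi, List.getElem_idxOf hi]

theorem post_parse : ∀ w : List ℕ, (LTree.node (parse w)).post = w := fun w => by
  by_cases h : w = []
  · subst h; rw [parse_nil, post_node]; simp
  · have h1 := post_parse (w.take (w.idxOf (wmin w)))
    have h2 := post_parse (w.drop (w.idxOf (wmin w) + 1))
    rw [parse_ne_nil w h, post_cons]
    simp only [h1, h2]
    conv_rhs => rw [wmin_decomp w h]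
    simp
termination_by w => w.length
decreasing_by
  all_goals
    have hm : wmin w ∈ w := (wmin_spec w h).1
    have hi := List.idxOf_lt_length_of_mem hm
    simp only [List.length_take, List.length_drop]
    omega

theorem wmin_eq {w : List ℕ} {a : ℕ} (hmem : a ∈ w) (hle : ∀ x ∈ w, a ≤ x) :
    wmin w = a := by
  have : w.min? = some a := by
    rw [List.min?_eq_some_iff]
    exact ⟨hmem, hle⟩
  simp [wmin, this]

theorem parse_post : ∀ ts : List (ℕ × LTree ℕ),
    (LTree.node ts).Increasing → (LTree.node ts).SortedChildren →
    parse ((LTree.node ts).post) = ts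
  | [] => by intros; rw [post_node]; simp [parse_nil]
  | (a, .node cs) :: rest => fun hinc hsort => by
    rw [increasing_node] at hinc
    rw [sorted_node] at hsort
    have hinc_head := hinc (a, .node cs) (List.mem_cons_self)
    have hlt1 : ∀ y ∈ (LTree.node cs).labels, a < y :=
      lt_labels _ hinc_head.2 a hinc_head.1
    have hpair : (a :: rest.map Prod.fst).Pairwise (· < ·) :=
      List.isChain_iff_pairwise.mp (by simpa using hsort.1 : List.Chain' (· < ·) (a :: rest.map Prod.fst))
    have hroot : ∀ x ∈ (LTree.node rest).rootLabels, a < x := by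
      rw [LTree.rootLabels]
      intro x hx
      exact (List.pairwise_cons.mp hpair).1 x hx
    have hincrest : (LTree.node rest).Increasing :=
      (increasing_node rest).mpr (fun p hp => hinc p (List.mem_cons_of_mem _ hp))
    have hlt2 : ∀ y ∈ (LTree.node rest).labels, a < y := lt_labels _ hincrest a hroot
    set u := (LTree.node cs).post with hu_def
    set v := (LTree.node rest).post with hv_def
    have hu : ∀ y ∈ u, a < y := fun y hy =>
      hlt1 y ((post_perm_labels (LTree.node cs)).subset hy)
    have hv : ∀ y ∈ v, a < y := fun y hy =>
      hlt2 y ((post_perm_labels (LTree.node rest)).subset hy)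
    have hword : (LTree.node ((a, LTree.node cs) :: rest)).post = u ++ a :: v := by
      rw [post_cons]; simp [u, v]
    rw [hword]
    have hwm : wmin (u ++ a :: v) = a := by
      apply wmin_eq (by simp)
      intro x hx
      rcases List.mem_append.mp hx with hx | hx
      · exact le_of_lt (hu x hx)
      · rcases List.mem_cons.mp hx with rfl | hx
        · exact le_refl x
        · exact le_of_lt (hv x hx)
    have hi : (u ++ a :: v).idxOf a = u.length := by
      rw [List.idxOf_append_of_notMem (fun hmem => lt_irrefl a (hu a hmem)),
        List.idxOf_cons_self]
      simp
    have ih1 : parse u = cs :=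
      parse_post cs hinc_head.2 (hsort.2 _ (List.mem_cons_self))
    have ih2 : parse v = rest := by
      apply parse_post rest hincrest
      rw [sorted_node]
      refine ⟨?_, fun p hp => hsort.2 p (List.mem_cons_of_mem _ hp)⟩
      have := hsort.1
      rw [List.map_cons] at this
      exact this.tail
    rw [parse_ne_nil _ (by simp), hwm, hi, List.take_left' rfl]
    have hdrop : (u ++ a :: v).drop (u.length + 1) = v := by
      rw [show u ++ a :: v = (u ++ [a]) ++ v by simp]
      exact List.drop_left' (by simp)
    rw [hdrop, ih1, ih2]
termination_by ts => sizeOf ts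
decreasing_by
  · simp only [List.cons.sizeOf_spec, Prod.mk.sizeOf_spec, LTree.node.sizeOf_spec]
    omega
  · simp only [List.cons.sizeOf_spec, Prod.mk.sizeOf_spec, LTree.node.sizeOf_spec]
    omega

theorem labels_parse_perm (w : List ℕ) : (LTree.node (parse w)).labels.Perm w := by
  have := post_perm_labels (LTree.node (parse w))
  rw [post_parse w] at this
  exact this.symm

theorem parse_increasing_sorted : ∀ w : List ℕ, w.Nodup →
    (LTree.node (parse w)).Increasing ∧ (LTree.node (parse w)).SortedChildren := fun w hnd => by
  by_cases h : w = []
  · subst h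
    rw [parse_nil]
    constructor
    · rw [increasing_node]; simp
    · rw [sorted_node]; simp [List.Chain']
  · set i := w.idxOf (wmin w) with hi_def
    set u := w.take i with hu_def
    set v := w.drop (i + 1) with hv_def
    have hdecomp : w = u ++ wmin w :: v := wmin_decomp w h
    have hnd' := hdecomp ▸ hnd
    rw [List.nodup_append] at hnd'
    have hlt : ∀ x, (x ∈ u ∨ x ∈ v) → wmin w < x := by
      intro x hx
      have hxw : x ∈ w := by
        rw [hdecomp]
        rcases hx with hx | hx
        · exact List.mem_append_left _ hx
        · exact List.mem_append_right _ (List.mem_cons_of_mem _ hx)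
      have hle := (wmin_spec w h).2 x hxw
      rcases Nat.lt_or_ge (wmin w) x with h' | h'
      · exact h'
      · exfalso
        have hxe : x = wmin w := le_antisymm (le_trans h' (le_refl _)) hle
        subst hxe
        rcases hx with hx | hx
        · exact hnd'.2.2 _ hx _ (List.mem_cons_self) rfl
        · exact (List.nodup_cons.mp hnd'.2.1).1 hx
    have ihu := parse_increasing_sorted u hnd'.1
    have ihv := parse_increasing_sorted v (List.nodup_cons.mp hnd'.2.1).2
    have hrootu : ∀ x ∈ (LTree.node (parse u)).rootLabels, wmin w < x := fun x hx =>
      hlt x (Or.inl ((labels_parse_perm u).subset (rootLabels_subset_labels _ hx)))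
    have hrootv : ∀ x ∈ (LTree.node (parse v)).rootLabels, wmin w < x := fun x hx =>
      hlt x (Or.inr ((labels_parse_perm v).subset (rootLabels_subset_labels _ hx)))
    rw [parse_ne_nil w h, ← hi_def, ← hu_def, ← hv_def]
    constructor
    · rw [increasing_node]
      intro p hp
      rcases List.mem_cons.mp hp with rfl | hp
      · exact ⟨hrootu, ihu.1⟩
      · exact (increasing_node _).mp ihv.1 p hp
    · rw [sorted_node]
      constructor
      · rw [List.map_cons]; show List.IsChain _ _; rw [List.isChain_cons]
        refine ⟨?_, (sorted_node _).mp ihv.2 |>.1⟩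
        intro y hy
        apply hrootv
        rw [LTree.rootLabels]
        exact List.mem_of_mem_head? hy
      · intro p hp
        rcases List.mem_cons.mp hp with rfl | hp
        · exact ihu.2
        · exact (sorted_node _).mp ihv.2 |>.2 p hp
termination_by w => w.length
decreasing_by
  all_goals
    have hm : wmin w ∈ w := (wmin_spec w h).1
    have hi := List.idxOf_lt_length_of_mem hm
    simp only [hu_def, hv_def, List.length_take, List.length_drop]
    omega

end LTree

/-- The depth-first post-order reading of labels is a bijection between the set of
sorted trees of degree `n` and the set of permutations of `{1, …, n}` (written as
words, i.e. rearrangements of `(1, …, n)`). -/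
theorem post_bijOn_sorted (n : ℕ) :
    Set.BijOn LTree.post
      {t : LTree ℕ | t.labels.Perm (List.range' 1 n) ∧ t.Increasing ∧ t.SortedChildren}
      {w : List ℕ | w.Perm (List.range' 1 n)} := by
  apply Set.InvOn.bijOn (f' := fun w => LTree.node (LTree.parse w))
  · constructor
    · intro t ht
      obtain ⟨ts⟩ := t
      simp only
      rw [LTree.parse_post ts ht.2.1 ht.2.2]
    · intro w _
      exact LTree.post_parse w
  · intro t ht
    exact (LTree.post_perm_labels t).trans ht.1
  · intro w hw
    have hnd : w.Nodup := hw.nodup_iff.mpr (List.nodup_range' (s := 1) (n := n))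
    exact ⟨(LTree.labels_parse_perm w).trans hw,
      (LTree.parse_increasing_sorted w hnd).1, (LTree.parse_increasing_sorted w hnd).2⟩
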